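/- Under the hypotheses of the previous result (M Hermitian positive definite, H_T, H_P invertible with ‖H_T⁻¹M‖_M ≤ C_T, ‖H_P⁻¹M‖_M ≤ C_P, M_1 = i((γ-1)/γ)M, M_2 = γ(1-Λ/𝓜)M, γ > 1, 0 < Λ < 𝓜), every generalized eigenvalue λ of A = [[H_T,M_1],[M_2,H_P]] with respect to the block-diagonal preconditioner Π_J = [[H_T,0],[0,H_P]] satisfies |λ - 1| ≤ √(C_T C_P (γ-1)(1 - Λ/𝓜)). -/

import Mathlib

open Matrix
open scoped ComplexOrder

noncomputable def vecNormM {n : ℕ} (M : Matrix (Fin n) (Fin n) ℂ) (u : Fin n → ℂ) : ℝ :=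
  Real.sqrt (star u ⬝ᵥ M.mulVec u).re

noncomputable def opNormM {n : ℕ} (M A : Matrix (Fin n) (Fin n) ℂ) : ℝ :=
  sSup {r : ℝ | ∃ u : Fin n → ℂ, vecNormM M u = 1 ∧ r = vecNormM M (A.mulVec u)}

open scoped MatrixOrder in
lemma exists_sqrtM {n : ℕ} {M : Matrix (Fin n) (Fin n) ℂ} (hM : M.PosDef) :
    ∃ S : Matrix (Fin n) (Fin n) ℂ, Sᴴ * S = M ∧ IsUnit S.det := by
  obtain ⟨B, hB⟩ := CStarAlgebra.nonneg_iff_eq_star_mul_self.mp hM.posSemidef.nonneg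
  refine ⟨B, ?_, ?_⟩
  · rw [← star_eq_conjTranspose]; exact hB.symm
  · have h1 : IsUnit (star B * B).det := hB ▸ (Matrix.isUnit_iff_isUnit_det M).mp hM.isUnit
    rw [det_mul] at h1
    exact isUnit_of_mul_isUnit_right h1

lemma vecNormM_eq' {n : ℕ} (M S : Matrix (Fin n) (Fin n) ℂ) (hS : Sᴴ * S = M)
    (u : Fin n → ℂ) :
    vecNormM M u = ‖(WithLp.equiv 2 (Fin n → ℂ)).symm (S.mulVec u)‖ := by
  have h1 : star (S.mulVec u) ⬝ᵥ (S.mulVec u) = star u ⬝ᵥ M.mulVec u := by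
    rw [star_mulVec, ← dotProduct_mulVec, mulVec_mulVec, hS]
  rw [EuclideanSpace.norm_eq, vecNormM, ← h1]
  congr 1
  simp [dotProduct, Complex.re_sum, ← Complex.normSq_eq_norm_sq, Complex.normSq_apply,
    Complex.sq_norm, mul_comm]

lemma vecNormM_nonneg {n : ℕ} (M : Matrix (Fin n) (Fin n) ℂ) (u : Fin n → ℂ) :
    0 ≤ vecNormM M u := Real.sqrt_nonneg _

lemma vecNormM_pos {n : ℕ} {M : Matrix (Fin n) (Fin n) ℂ} (hM : M.PosDef) {u : Fin n → ℂ}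
    (hu : u ≠ 0) : 0 < vecNormM M u :=
  Real.sqrt_pos.mpr (hM.re_dotProduct_pos hu)

lemma vecNormM_smul {n : ℕ} (M : Matrix (Fin n) (Fin n) ℂ) (hM : M.PosDef) (c : ℂ)
    (u : Fin n → ℂ) : vecNormM M (c • u) = ‖c‖ * vecNormM M u := by
  obtain ⟨S, hS, -⟩ := exists_sqrtM hM
  rw [vecNormM_eq' M S hS, vecNormM_eq' M S hS, Matrix.mulVec_smul]
  rw [show (WithLp.equiv 2 (Fin n → ℂ)).symm (c • S.mulVec u)
      = c • (WithLp.equiv 2 (Fin n → ℂ)).symm (S.mulVec u) from rfl]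
  rw [norm_smul]

lemma exists_boundM {n : ℕ} (M B : Matrix (Fin n) (Fin n) ℂ) (hM : M.PosDef) :
    ∃ C : ℝ, 0 ≤ C ∧ ∀ u : Fin n → ℂ, vecNormM M (B.mulVec u) ≤ C * vecNormM M u := by
  obtain ⟨S, hS, hdet⟩ := exists_sqrtM hM
  have hSS : S⁻¹ * S = 1 := nonsing_inv_mul S hdet
  let g := Matrix.toEuclideanLin (S * B * S⁻¹)
  let gc := LinearMap.toContinuousLinearMap g
  refine ⟨‖gc‖, norm_nonneg _, fun u => ?_⟩
  rw [vecNormM_eq' M S hS, vecNormM_eq' M S hS]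
  have hkey : (WithLp.equiv 2 (Fin n → ℂ)).symm (S.mulVec (B.mulVec u)) =
      gc ((WithLp.equiv 2 (Fin n → ℂ)).symm (S.mulVec u)) := by
    rw [show gc ((WithLp.equiv 2 (Fin n → ℂ)).symm (S.mulVec u))
        = g ((WithLp.equiv 2 (Fin n → ℂ)).symm (S.mulVec u)) from
      congrFun (LinearMap.coe_toContinuousLinearMap' g) _]
    show _ = Matrix.toEuclideanLin (S * B * S⁻¹) ((WithLp.equiv 2 (Fin n → ℂ)).symm (S.mulVec u))
    rw [show Matrix.toEuclideanLin (S * B * S⁻¹) ((WithLp.equiv 2 (Fin n → ℂ)).symm (S.mulVec u)) = (WithLp.equiv 2 (Fin n → ℂ)).symm ((S * B * S⁻¹) *ᵥ (S *ᵥ u)) from rfl]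
    congr 1
    rw [mulVec_mulVec, mulVec_mulVec, mul_assoc (S * B) S⁻¹ S, hSS, mul_one]
  rw [hkey]
  exact gc.le_opNorm _

lemma mulVec_vecNormM_le {n : ℕ} (M B : Matrix (Fin n) (Fin n) ℂ) (hM : M.PosDef)
    (v : Fin n → ℂ) : vecNormM M (B.mulVec v) ≤ opNormM M B * vecNormM M v := by
  obtain ⟨C, hC0, hC⟩ := exists_boundM M B hM
  have hbdd : BddAbove {r : ℝ | ∃ u : Fin n → ℂ, vecNormM M u = 1 ∧
      r = vecNormM M (B.mulVec u)} := by
    refine ⟨C, ?_⟩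
    rintro r ⟨u, hu, rfl⟩
    calc vecNormM M (B.mulVec u) ≤ C * vecNormM M u := hC u
    _ = C := by rw [hu, mul_one]
  by_cases hv : v = 0
  · rw [hv]
    simp [vecNormM, Matrix.mulVec_zero]
  · set c := vecNormM M v with hc
    have hc0 : 0 < c := vecNormM_pos hM hv
    have hw : vecNormM M (((c⁻¹ : ℝ) : ℂ) • v) = 1 := by
      rw [vecNormM_smul M hM, Complex.norm_real, Real.norm_eq_abs, abs_of_pos (inv_pos.mpr hc0), ← hc,
        inv_mul_cancel₀ hc0.ne']
    have hmem : vecNormM M (B.mulVec (((c⁻¹ : ℝ) : ℂ) • v)) ∈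
        {r : ℝ | ∃ u : Fin n → ℂ, vecNormM M u = 1 ∧ r = vecNormM M (B.mulVec u)} :=
      ⟨_, hw, rfl⟩
    have hle := le_csSup hbdd hmem
    rw [Matrix.mulVec_smul, vecNormM_smul M hM, Complex.norm_real, Real.norm_eq_abs,
      abs_of_pos (inv_pos.mpr hc0)] at hle
    have := mul_le_mul_of_nonneg_left hle hc0.le
    rw [← mul_assoc, mul_inv_cancel₀ hc0.ne', one_mul] at this
    calc vecNormM M (B.mulVec v) ≤ c * opNormM M B := this
    _ = opNormM M B * c := mul_comm _ _

lemma keqAux (CT CP γ Λ 𝓜 : ℝ) (hγ : γ ≠ 0) :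
    ((γ - 1) / γ * CT) * (γ * (1 - Λ / 𝓜) * CP) = CT * CP * (γ - 1) * (1 - Λ / 𝓜) := by
  field_simp

lemma posAux (γ Λ 𝓜 : ℝ) (hγ : 1 < γ) (h1 : Λ / 𝓜 < 1) : (0:ℝ) ≤ γ * (1 - Λ / 𝓜) := by
  nlinarith

lemma zeroAux {a t : ℝ} (ha : 0 ≤ a) (ht : 0 < t) (h : a * t ≤ 0) : a = 0 := by
  nlinarith

lemma nonnegAux {a p k q : ℝ} (h0 : 0 ≤ a * p) (hq : 0 < q) (h : a * p ≤ k * q) : 0 ≤ k := by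
  nlinarith

set_option maxHeartbeats 1000000 in
theorem stmt6 {n : ℕ} (M HT HP : Matrix (Fin n) (Fin n) ℂ) (hM : M.PosDef)
    (hHT : IsUnit HT) (hHP : IsUnit HP)
    (CT CP γ Λ 𝓜 : ℝ) (hγ : 1 < γ) (hΛ : 0 < Λ) (hΛ𝓜 : Λ < 𝓜)
    (hCT : opNormM M (HT⁻¹ * M) ≤ CT) (hCP : opNormM M (HP⁻¹ * M) ≤ CP)
    (lam : ℂ)
    (hlam : ∃ x : (Fin n ⊕ Fin n) → ℂ, x ≠ 0 ∧
      (Matrix.fromBlocks HT ((Complex.I * (((γ : ℂ) - 1) / (γ : ℂ))) • M)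
          (((γ * (1 - Λ / 𝓜) : ℝ) : ℂ) • M) HP).mulVec x =
        lam • (Matrix.fromBlocks HT 0 0 HP).mulVec x) :
    ‖lam - 1‖ ≤ Real.sqrt (CT * CP * (γ - 1) * (1 - Λ / 𝓜)) := by
  obtain ⟨x, hx, heq⟩ := hlam
  set c1 : ℂ := Complex.I * (((γ : ℂ) - 1) / (γ : ℂ)) with hc1def
  set c2 : ℂ := ((γ * (1 - Λ / 𝓜) : ℝ) : ℂ) with hc2def
  set u : Fin n → ℂ := x ∘ Sum.inl with hudef
  set v : Fin n → ℂ := x ∘ Sum.inr with hvdef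
  have hxuv : x = Sum.elim u v := by funext i; cases i <;> rfl
  rw [hxuv, fromBlocks_mulVec, fromBlocks_mulVec] at heq
  have h1 : HT.mulVec u + c1 • M.mulVec v = lam • HT.mulVec u := by
    funext i
    have := congrFun heq (Sum.inl i)
    simpa [Matrix.smul_mulVec] using this
  have h2 : c2 • M.mulVec u + HP.mulVec v = lam • HP.mulVec v := by
    funext i
    have := congrFun heq (Sum.inr i)
    simpa [Matrix.smul_mulVec] using this
  have h1' : c1 • M.mulVec v = (lam - 1) • HT.mulVec u := by
    rw [sub_smul, one_smul, eq_sub_iff_add_eq, add_comm]; exact h1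
  have h2' : c2 • M.mulVec u = (lam - 1) • HP.mulVec v := by
    rw [sub_smul, one_smul, eq_sub_iff_add_eq]; exact h2
  have hTinv : HT⁻¹ * HT = 1 := nonsing_inv_mul HT ((Matrix.isUnit_iff_isUnit_det HT).mp hHT)
  have hPinv : HP⁻¹ * HP = 1 := nonsing_inv_mul HP ((Matrix.isUnit_iff_isUnit_det HP).mp hHP)
  have h1'' : c1 • ((HT⁻¹ * M).mulVec v) = (lam - 1) • u := by
    have := congrArg (fun w => HT⁻¹.mulVec w) h1'
    simpa [Matrix.mulVec_smul, Matrix.mulVec_mulVec, hTinv, Matrix.one_mulVec] using this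
  have h2'' : c2 • ((HP⁻¹ * M).mulVec u) = (lam - 1) • v := by
    have := congrArg (fun w => HP⁻¹.mulVec w) h2'
    simpa [Matrix.mulVec_smul, Matrix.mulVec_mulVec, hPinv, Matrix.one_mulVec] using this
  set a : ℝ := ‖lam - 1‖ with hadef
  have hγ0 : (0 : ℝ) < γ := by linarith
  have h𝓜0 : (0 : ℝ) < 𝓜 := by linarith
  have hfrac : Λ / 𝓜 < 1 := (div_lt_one h𝓜0).mpr hΛ𝓜
  have habs1 : ‖c1‖ = (γ - 1) / γ := by
    rw [hc1def, norm_mul, Complex.norm_I, one_mul]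
    have hcast : ((γ : ℂ) - 1) = ((γ - 1 : ℝ) : ℂ) := by push_cast; ring
    rw [hcast, norm_div, Complex.norm_real, Complex.norm_real, Real.norm_eq_abs, Real.norm_eq_abs,
      abs_of_nonneg (by linarith : (0:ℝ) ≤ γ - 1), abs_of_pos hγ0]
  have habs2 : ‖c2‖ = γ * (1 - Λ / 𝓜) := by
    rw [hc2def, Complex.norm_real, Real.norm_eq_abs, abs_of_nonneg (posAux γ Λ 𝓜 hγ hfrac)]
  have n1 : ‖c1‖ * vecNormM M ((HT⁻¹ * M).mulVec v) = a * vecNormM M u := by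
    have := congrArg (vecNormM M) h1''
    rwa [vecNormM_smul M hM, vecNormM_smul M hM] at this
  have n2 : ‖c2‖ * vecNormM M ((HP⁻¹ * M).mulVec u) = a * vecNormM M v := by
    have := congrArg (vecNormM M) h2''
    rwa [vecNormM_smul M hM, vecNormM_smul M hM] at this
  have bT : vecNormM M ((HT⁻¹ * M).mulVec v) ≤ CT * vecNormM M v :=
    (mulVec_vecNormM_le M (HT⁻¹ * M) hM v).trans
      (mul_le_mul_of_nonneg_right hCT (vecNormM_nonneg M v))
  have bP : vecNormM M ((HP⁻¹ * M).mulVec u) ≤ CP * vecNormM M u :=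
    (mulVec_vecNormM_le M (HP⁻¹ * M) hM u).trans
      (mul_le_mul_of_nonneg_right hCP (vecNormM_nonneg M u))
  have A1 : a * vecNormM M u ≤ ((γ - 1) / γ * CT) * vecNormM M v := by
    rw [← n1, habs1]
    have h1c : (0:ℝ) ≤ (γ - 1) / γ := div_nonneg (by linarith) hγ0.le
    calc (γ - 1) / γ * vecNormM M ((HT⁻¹ * M).mulVec v)
        ≤ (γ - 1) / γ * (CT * vecNormM M v) := mul_le_mul_of_nonneg_left bT h1c
      _ = ((γ - 1) / γ * CT) * vecNormM M v := by ring
  have A2 : a * vecNormM M v ≤ (γ * (1 - Λ / 𝓜) * CP) * vecNormM M u := by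
    rw [← n2, habs2]
    have h2c : (0:ℝ) ≤ γ * (1 - Λ / 𝓜) := posAux γ Λ 𝓜 hγ hfrac
    calc γ * (1 - Λ / 𝓜) * vecNormM M ((HP⁻¹ * M).mulVec u)
        ≤ γ * (1 - Λ / 𝓜) * (CP * vecNormM M u) := mul_le_mul_of_nonneg_left bP h2c
      _ = (γ * (1 - Λ / 𝓜) * CP) * vecNormM M u := by ring
  have ha0 : 0 ≤ a := norm_nonneg _
  by_cases hu0 : u = 0
  · have hv0 : v ≠ 0 := by
      intro hv0
      exact hx (by rw [hxuv, hu0, hv0]; funext i; cases i <;> rfl)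
    have hvn : 0 < vecNormM M v := vecNormM_pos hM hv0
    have h0 : a * vecNormM M v ≤ 0 := by
      have : vecNormM M u = 0 := by rw [hu0]; simp [vecNormM]
      rw [this, mul_zero] at A2
      exact A2
    have ha : a = 0 := zeroAux ha0 hvn h0
    rw [ha]
    exact Real.sqrt_nonneg _
  · by_cases hv0 : v = 0
    · have hun : 0 < vecNormM M u := vecNormM_pos hM hu0
      have h0 : a * vecNormM M u ≤ 0 := by
        have : vecNormM M v = 0 := by rw [hv0]; simp [vecNormM]
        rw [this, mul_zero] at A1
        exact A1
      have ha : a = 0 := zeroAux ha0 hun h0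
      rw [ha]
      exact Real.sqrt_nonneg _
    · have hun : 0 < vecNormM M u := vecNormM_pos hM hu0
      have hvn : 0 < vecNormM M v := vecNormM_pos hM hv0
      set p := vecNormM M u
      set q := vecNormM M v
      have hk1 : (0:ℝ) ≤ ((γ - 1) / γ * CT) := nonnegAux (mul_nonneg ha0 hun.le) hvn A1
      have hmul := mul_le_mul A1 A2 (mul_nonneg ha0 hvn.le) (mul_nonneg hk1 hvn.le)
      have key : a ^ 2 * (p * q) ≤ ((γ - 1) / γ * CT) * (γ * (1 - Λ / 𝓜) * CP) * (p * q) := by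
        calc a ^ 2 * (p * q) = (a * p) * (a * q) := by ring
          _ ≤ (((γ - 1) / γ * CT) * q) * ((γ * (1 - Λ / 𝓜) * CP) * p) := hmul
          _ = ((γ - 1) / γ * CT) * (γ * (1 - Λ / 𝓜) * CP) * (p * q) := by ring
      have hsq : a ^ 2 ≤ ((γ - 1) / γ * CT) * (γ * (1 - Λ / 𝓜) * CP) :=
        (mul_le_mul_iff_left₀ (mul_pos hun hvn)).mp key
      have hKeq : ((γ - 1) / γ * CT) * (γ * (1 - Λ / 𝓜) * CP) =
          CT * CP * (γ - 1) * (1 - Λ / 𝓜) := keqAux CT CP γ Λ 𝓜 hγ0.ne'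
      exact Real.le_sqrt_of_sq_le (by rw [← hKeq]; exact hsq)
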